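/- arXiv:1104.2970 — 6 statements merged into one kernel-verified Lean document; each statement's English description precedes it below -/
import Mathlib

section
/- Canonical min-max duality (Gao–Strang): if σ̄ is a critical point of Π^d with G(σ̄) positive semi-definite and x̄ = G(σ̄)⁻¹F(σ̄) (i.e., G(σ̄)x̄ = F(σ̄)), then x̄ is a global minimizer of Π(x) = V(Λ(x)) + ½⟨x,Ax⟩ - ⟨x,f⟩ over all of ℝ^n. -/
open Matrix

/-- Gradient inequality for convex differentiable functions. -/
lemma convex_grad_ineq {E : Type*} [NormedAddCommGroup E] [NormedSpace ℝ E]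
    {V : E → ℝ} (hV : ConvexOn ℝ Set.univ V) (hVd : Differentiable ℝ V)
    (x y : E) : V x + fderiv ℝ V x (y - x) ≤ V y := by
  set g : ℝ → ℝ := fun t => V (t • (y - x) + x) with hg
  have hgc : ConvexOn ℝ Set.univ g := by
    have := hV.comp_affineMap (AffineMap.lineMap x y : ℝ →ᵃ[ℝ] E)
    simpa [hg, Function.comp_def, AffineMap.lineMap_apply] using this
  have hline : HasDerivAt (fun t : ℝ => t • (y - x) + x) (y - x) (0 : ℝ) := by
    simpa using ((hasDerivAt_id (0:ℝ)).smul_const (y - x)).add_const x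
  have hx0 : (0:ℝ) • (y - x) + x = x := by simp
  have hV' : HasFDerivAt V (fderiv ℝ V x) ((0:ℝ) • (y - x) + x) := by
    rw [hx0]; exact (hVd x).hasFDerivAt
  have hgd : HasDerivAt g (fderiv ℝ V x (y - x)) 0 := hV'.comp_hasDerivAt 0 hline
  have h01 : (0:ℝ) < 1 := one_pos
  have hsl := hgc.le_slope_of_hasDerivAt (Set.mem_univ 0) (Set.mem_univ 1) h01 hgd
  have hslope : slope g 0 1 = g 1 - g 0 := by simp [slope_def_field]
  rw [hslope] at hsl
  have hg0 : g 0 = V x := by simp [hg]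
  have hg1 : g 1 = V y := by simp [hg]
  rw [hg0, hg1] at hsl
  linarith

/-- fderiv applied to a vector equals the dot product with the gradient. -/
lemma fderiv_eq_dot {m : ℕ} (V : (Fin m → ℝ) → ℝ) (p v : Fin m → ℝ) :
    fderiv ℝ V p v = (fun k => fderiv ℝ V p (Pi.single k 1)) ⬝ᵥ v := by
  have hv : v = ∑ k, v k • (Pi.single k 1 : Fin m → ℝ) := by
    funext i
    simp [Finset.sum_apply, Pi.single_apply, Finset.sum_ite_eq', mul_comm]
  conv_lhs => rw [hv]
  rw [map_sum]
  simp [dotProduct, mul_comm]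

lemma dot_sum_mulVec {n m : ℕ} (σ : Fin m → ℝ) (B : Fin m → Matrix (Fin n) (Fin n) ℝ)
    (u w : Fin n → ℝ) :
    u ⬝ᵥ (∑ k, σ k • B k) *ᵥ w = ∑ k, σ k * (u ⬝ᵥ (B k) *ᵥ w) := by
  simp only [dotProduct, Matrix.mulVec, Matrix.sum_apply, Matrix.smul_apply, smul_eq_mul,
    Finset.sum_mul, Finset.mul_sum]
  calc (∑ i : Fin n, ∑ j : Fin n, ∑ k : Fin m, u i * (σ k * B k i j * w j))
      = ∑ i : Fin n, ∑ k : Fin m, ∑ j : Fin n, u i * (σ k * B k i j * w j) :=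
        Finset.sum_congr rfl fun i _ => Finset.sum_comm
    _ = ∑ k : Fin m, ∑ i : Fin n, ∑ j : Fin n, u i * (σ k * B k i j * w j) :=
        Finset.sum_comm
    _ = ∑ k : Fin m, ∑ i : Fin n, ∑ j : Fin n, σ k * (u i * (B k i j * w j)) :=
        Finset.sum_congr rfl fun k _ => Finset.sum_congr rfl fun i _ =>
          Finset.sum_congr rfl fun j _ => by ring

lemma dot_sum_smul {n m : ℕ} (σ : Fin m → ℝ) (b : Fin m → Fin n → ℝ) (u : Fin n → ℝ) :
    u ⬝ᵥ (∑ k, σ k • b k) = ∑ k, σ k * (b k ⬝ᵥ u) := by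
  simp only [dotProduct, Finset.sum_apply, Pi.smul_apply, smul_eq_mul, Finset.mul_sum]
  calc (∑ i : Fin n, ∑ k : Fin m, u i * (σ k * b k i))
      = ∑ k : Fin m, ∑ i : Fin n, u i * (σ k * b k i) := Finset.sum_comm
    _ = ∑ k : Fin m, ∑ i : Fin n, σ k * (b k i * u i) :=
        Finset.sum_congr rfl fun k _ => Finset.sum_congr rfl fun i _ => by ring

lemma dot_symm_of_isSymm {n : ℕ} {M : Matrix (Fin n) (Fin n) ℝ} (h : M.IsSymm)
    (u w : Fin n → ℝ) : u ⬝ᵥ M *ᵥ w = w ⬝ᵥ M *ᵥ u := by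
  rw [Matrix.dotProduct_mulVec, ← Matrix.mulVec_transpose, h.eq, dotProduct_comm]

/-- Canonical min-max duality (Gao–Strang): if `σ̄` is a critical point of `Π^d`
with `G(σ̄) ⪰ 0` and `G(σ̄) x̄ = F(σ̄)`, then `x̄` is a global minimizer of `Π`. -/
theorem canonical_min_max_duality {n m : ℕ}
    (A : Matrix (Fin n) (Fin n) ℝ) (B : Fin m → Matrix (Fin n) (Fin n) ℝ)
    (b : Fin m → (Fin n → ℝ)) (f : Fin n → ℝ)
    (V : (Fin m → ℝ) → ℝ)
    (hA : A.IsSymm) (hB : ∀ k, (B k).IsSymm)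
    (hV : ConvexOn ℝ Set.univ V) (hVd : Differentiable ℝ V)
    (Λ : (Fin n → ℝ) → (Fin m → ℝ))
    (hΛ : Λ = fun x k => (1/2) * (x ⬝ᵥ (B k) *ᵥ x) + (b k) ⬝ᵥ x)
    (G : (Fin m → ℝ) → Matrix (Fin n) (Fin n) ℝ)
    (hG : G = fun σ => A + ∑ k, σ k • B k)
    (F : (Fin m → ℝ) → (Fin n → ℝ))
    (hF : F = fun σ => f - ∑ k, σ k • b k)
    (Pr : (Fin n → ℝ) → ℝ)
    (hPr : Pr = fun x => V (Λ x) + (1/2) * (x ⬝ᵥ A *ᵥ x) - x ⬝ᵥ f)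
    (σbar : Fin m → ℝ) (xbar : Fin n → ℝ)
    -- criticality: σ̄ = ∇V(Λ(x̄)) and G(σ̄)x̄ = F(σ̄)
    (hσ : σbar = fun k => fderiv ℝ V (Λ xbar) (Pi.single k 1))
    (heq : (G σbar) *ᵥ xbar = F σbar)
    (hpsd : (G σbar).PosSemidef) :
    ∀ x : Fin n → ℝ, Pr xbar ≤ Pr x := by
  intro x
  -- convexity inequality
  have hconv : V (Λ xbar) + σbar ⬝ᵥ (Λ x - Λ xbar) ≤ V (Λ x) := by
    have h1 := convex_grad_ineq hV hVd (Λ xbar) (Λ x)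
    have h2 : fderiv ℝ V (Λ xbar) (Λ x - Λ xbar) = σbar ⬝ᵥ (Λ x - Λ xbar) := by
      rw [fderiv_eq_dot, hσ]
    rw [h2] at h1
    exact h1
  -- quadratic form expansion of G
  have hGquad : ∀ u w : Fin n → ℝ,
      u ⬝ᵥ (G σbar) *ᵥ w = u ⬝ᵥ A *ᵥ w + ∑ k, σbar k * (u ⬝ᵥ (B k) *ᵥ w) := by
    intro u w
    rw [hG]
    simp only [Matrix.add_mulVec, dotProduct_add]
    rw [dot_sum_mulVec]
  -- symmetry of G
  have hGsymm : xbar ⬝ᵥ (G σbar) *ᵥ x = x ⬝ᵥ (G σbar) *ᵥ xbar := by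
    rw [hGquad, hGquad, dot_symm_of_isSymm hA]
    congr 1
    exact Finset.sum_congr rfl fun k _ => by rw [dot_symm_of_isSymm (hB k)]
  -- positivity of the quadratic form at x - xbar
  have hpos : 0 ≤ (x - xbar) ⬝ᵥ (G σbar) *ᵥ (x - xbar) := by
    simpa using hpsd.dotProduct_mulVec_nonneg (x - xbar)
  -- expand the dot product with σbar
  have hdot : σbar ⬝ᵥ (Λ x - Λ xbar)
      = ∑ k, σbar k * ((1/2) * (x ⬝ᵥ (B k) *ᵥ x) - (1/2) * (xbar ⬝ᵥ (B k) *ᵥ xbar))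
        + ∑ k, σbar k * ((b k) ⬝ᵥ x - (b k) ⬝ᵥ xbar) := by
    rw [hΛ]
    simp only [dotProduct, Pi.sub_apply]
    rw [← Finset.sum_add_distrib]
    exact Finset.sum_congr rfl fun k _ => by ring
  -- (x - xbar) ⬝ F σbar
  have hFdot : (x - xbar) ⬝ᵥ F σbar
      = (x ⬝ᵥ f - xbar ⬝ᵥ f) - ∑ k, σbar k * ((b k) ⬝ᵥ x - (b k) ⬝ᵥ xbar) := by
    rw [hF]
    simp only [dotProduct_sub, sub_dotProduct]
    rw [dot_sum_smul, dot_sum_smul]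
    rw [← Finset.sum_sub_distrib]
    have : ∑ k, (σbar k * (b k ⬝ᵥ x) - σbar k * (b k ⬝ᵥ xbar))
        = ∑ k, σbar k * ((b k) ⬝ᵥ x - (b k) ⬝ᵥ xbar) :=
      Finset.sum_congr rfl fun k _ => by ring
    rw [this]
  -- split the B-sum
  have hsplit : ∑ k, σbar k * ((1/2) * (x ⬝ᵥ (B k) *ᵥ x) - (1/2) * (xbar ⬝ᵥ (B k) *ᵥ xbar))
      = (1/2) * (∑ k, σbar k * (x ⬝ᵥ (B k) *ᵥ x))
        - (1/2) * (∑ k, σbar k * (xbar ⬝ᵥ (B k) *ᵥ xbar)) := by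
    rw [Finset.mul_sum, Finset.mul_sum, ← Finset.sum_sub_distrib]
    exact Finset.sum_congr rfl fun k _ => by ring
  -- the quadratic identity: ½xGx - ½x̄Gx̄ - (x-x̄)G x̄ = ½(x-x̄)G(x-x̄)
  have hquad : (x - xbar) ⬝ᵥ (G σbar) *ᵥ (x - xbar)
      = x ⬝ᵥ (G σbar) *ᵥ x - 2 * (x ⬝ᵥ (G σbar) *ᵥ xbar) + xbar ⬝ᵥ (G σbar) *ᵥ xbar := by
    simp only [sub_dotProduct, Matrix.mulVec_sub, dotProduct_sub]
    rw [hGsymm]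
    ring
  -- x ⬝ (G x̄) = x ⬝ F
  have hxF : (x - xbar) ⬝ᵥ (G σbar) *ᵥ xbar = (x - xbar) ⬝ᵥ F σbar := by rw [heq]
  have hxF' : x ⬝ᵥ (G σbar) *ᵥ xbar
      = (x - xbar) ⬝ᵥ F σbar + xbar ⬝ᵥ (G σbar) *ᵥ xbar := by
    rw [← hxF]; simp only [sub_dotProduct]; ring
  -- put it together
  have hPrx : Pr x = V (Λ x) + (1/2) * (x ⬝ᵥ A *ᵥ x) - x ⬝ᵥ f := by rw [hPr]
  have hPrxb : Pr xbar = V (Λ xbar) + (1/2) * (xbar ⬝ᵥ A *ᵥ xbar) - xbar ⬝ᵥ f := by rw [hPr]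
  have hGx := hGquad x x
  have hGxb := hGquad xbar xbar
  -- Pr x - Pr xbar ≥ ½ (x-x̄)G(x-x̄) ≥ 0
  nlinarith [hconv, hdot, hFdot, hsplit, hquad, hxF', hpos, hGx, hGxb]
end

section
/- Key convexity inequality in the min-max duality proof: if V is convex differentiable, σ̄ = ∇V(Λ(x̄)), G(σ̄) ⪰ 0, and G(σ̄)x̄ = F(σ̄), then for all x ∈ ℝ^n, Π(x) - Π(x̄) ≥ ⟨x - x̄, G(σ̄)x̄ - F(σ̄)⟩ = 0, where Π(x) = V(Λ(x)) + ½x^T A x - x^T f. -/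
open Matrix

/-- Gradient inequality for a convex differentiable function. -/
lemma convex_grad_ineq_s4 {m : ℕ} {V : (Fin m → ℝ) → ℝ}
    (hV : ConvexOn ℝ Set.univ V) (hVd : Differentiable ℝ V)
    (p q : Fin m → ℝ) : fderiv ℝ V p (q - p) ≤ V q - V p := by
  set D := fderiv ℝ V p (q - p) with hD
  set φ : ℝ → ℝ := fun t => V (p + t • (q - p)) with hφ
  have hd : HasDerivAt φ D 0 := by
    have h1 : HasFDerivAt V (fderiv ℝ V p) (p + (0:ℝ) • (q - p)) := by
      simpa using (hVd p).hasFDerivAt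
    have h2 : HasDerivAt (fun t : ℝ => p + t • (q - p)) (q - p) 0 := by
      simpa using ((hasDerivAt_id (0:ℝ)).smul_const (q - p)).const_add p
    have h3 := h1.comp_hasDerivAt 0 h2
    exact h3
  have hslope : Filter.Tendsto (slope φ 0) (nhdsWithin 0 (Set.Ioi 0)) (nhds D) :=
    (hasDerivAt_iff_tendsto_slope.mp hd).mono_left
      (nhdsWithin_mono 0 (fun t ht => by simpa using ne_of_gt ht))
  have hbound : ∀ᶠ t in nhdsWithin 0 (Set.Ioi 0), slope φ 0 t ≤ V q - V p := by
    filter_upwards [Ioo_mem_nhdsGT_of_mem (Set.left_mem_Ico.mpr one_pos)] with t ht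
    have ht0 : (0:ℝ) < t := ht.1
    have ht1 : t < 1 := ht.2
    have hcvx := hV.2 (Set.mem_univ p) (Set.mem_univ q)
      (by linarith : (0:ℝ) ≤ 1 - t) ht0.le (by ring)
    have hpt : p + t • (q - p) = (1 - t) • p + t • q := by
      rw [smul_sub, sub_smul, one_smul]; abel
    have hφt : φ t ≤ (1 - t) * V p + t * V q := by
      rw [hφ]; simp only []; rw [hpt]; simpa [smul_eq_mul] using hcvx
    have hφ0 : φ 0 = V p := by simp [hφ]
    have hslope_eq : slope φ 0 t = (φ t - φ 0) / t := by
      rw [slope_def_field]; ring_nf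
    rw [hslope_eq, div_le_iff₀ ht0, hφ0]
    nlinarith [hφt]
  have hfin := le_of_tendsto hslope hbound
  have hφ1 : φ 1 = V q := by simp [hφ]
  exact hfin

lemma sum_mulVec_aux {ι n' : Type*} [Fintype n'] (s : Finset ι)
    (M : ι → Matrix n' n' ℝ) (v : n' → ℝ) :
    (∑ k ∈ s, M k) *ᵥ v = ∑ k ∈ s, (M k) *ᵥ v :=
  map_sum (AddMonoidHom.mk' (fun M => M *ᵥ v) (fun M N => Matrix.add_mulVec M N v)) M s

lemma dotProduct_sum_aux {ι n' : Type*} [Fintype n'] (s : Finset ι)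
    (u : n' → ℝ) (w : ι → (n' → ℝ)) :
    u ⬝ᵥ (∑ k ∈ s, w k) = ∑ k ∈ s, u ⬝ᵥ w k :=
  map_sum (AddMonoidHom.mk' (fun v => u ⬝ᵥ v) (fun a c => dotProduct_add u a c)) w s

lemma sum_dotProduct_aux {ι n' : Type*} [Fintype n'] (s : Finset ι)
    (w : ι → (n' → ℝ)) (u : n' → ℝ) :
    (∑ k ∈ s, w k) ⬝ᵥ u = ∑ k ∈ s, w k ⬝ᵥ u :=
  map_sum (AddMonoidHom.mk' (fun v => v ⬝ᵥ u) (fun a c => add_dotProduct a c u)) w s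

/-- Key convexity inequality in the min-max duality proof:
`Π(x) - Π(x̄) ≥ ⟨x - x̄, G(σ̄)x̄ - F(σ̄)⟩ = 0` for all `x`. -/
theorem key_convexity_inequality {n m : ℕ}
    (A : Matrix (Fin n) (Fin n) ℝ) (B : Fin m → Matrix (Fin n) (Fin n) ℝ)
    (b : Fin m → (Fin n → ℝ)) (f : Fin n → ℝ)
    (V : (Fin m → ℝ) → ℝ)
    (hA : A.IsSymm) (hB : ∀ k, (B k).IsSymm)
    (hV : ConvexOn ℝ Set.univ V) (hVd : Differentiable ℝ V)
    (Λ : (Fin n → ℝ) → (Fin m → ℝ))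
    (hΛ : Λ = fun x k => (1/2) * (x ⬝ᵥ (B k) *ᵥ x) + (b k) ⬝ᵥ x)
    (G : (Fin m → ℝ) → Matrix (Fin n) (Fin n) ℝ)
    (hG : G = fun σ => A + ∑ k, σ k • B k)
    (F : (Fin m → ℝ) → (Fin n → ℝ))
    (hF : F = fun σ => f - ∑ k, σ k • b k)
    (Pr : (Fin n → ℝ) → ℝ)
    (hPr : Pr = fun x => V (Λ x) + (1/2) * (x ⬝ᵥ A *ᵥ x) - x ⬝ᵥ f)
    (σbar : Fin m → ℝ) (xbar : Fin n → ℝ)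
    (hσ : σbar = fun k => fderiv ℝ V (Λ xbar) (Pi.single k 1))
    (hpsd : (G σbar).PosSemidef)
    (heq : (G σbar) *ᵥ xbar = F σbar) :
    ∀ x : Fin n → ℝ,
      Pr x - Pr xbar ≥ (x - xbar) ⬝ᵥ ((G σbar) *ᵥ xbar - F σbar) ∧
      (x - xbar) ⬝ᵥ ((G σbar) *ᵥ xbar - F σbar) = 0 := by
  intro x
  have hzero : (x - xbar) ⬝ᵥ ((G σbar) *ᵥ xbar - F σbar) = 0 := by
    rw [heq, sub_self, dotProduct_zero]
  refine ⟨?_, hzero⟩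
  rw [hzero, ge_iff_le, ← sub_nonneg, sub_zero] at *
  set Gm := G σbar with hGm
  -- symmetry of Gm
  have hsym : Gmᵀ = Gm := by
    rw [hGm, hG]
    simp only []
    rw [transpose_add, transpose_sum]
    rw [hA.eq]
    congr 1
    exact Finset.sum_congr rfl fun k _ => by rw [transpose_smul, (hB k).eq]
  have hswap : ∀ u v : Fin n → ℝ, u ⬝ᵥ Gm *ᵥ v = v ⬝ᵥ Gm *ᵥ u := by
    intro u v
    conv_lhs => rw [← hsym]
    rw [Matrix.mulVec_transpose, dotProduct_comm, ← Matrix.dotProduct_mulVec]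
  -- fderiv as a sum against σbar
  have hfd : ∀ v : Fin m → ℝ, fderiv ℝ V (Λ xbar) v = ∑ k, v k * σbar k := by
    intro v
    have h := LinearMap.pi_apply_eq_sum_univ
      ((fderiv ℝ V (Λ xbar)) : (Fin m → ℝ) →ₗ[ℝ] ℝ) v
    simp only [ContinuousLinearMap.coe_coe] at h
    rw [h, hσ]
    refine Finset.sum_congr rfl fun k _ => ?_
    have hs : (fun j => if k = j then (1:ℝ) else 0) = Pi.single k 1 := by
      funext j
      rw [Pi.single_apply]
      exact if_congr eq_comm rfl rfl
    rw [hs, smul_eq_mul]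
  -- gradient inequality
  have hgrad : ∑ k, (Λ x k - Λ xbar k) * σbar k ≤ V (Λ x) - V (Λ xbar) := by
    have := convex_grad_ineq_s4 hV hVd (Λ xbar) (Λ x)
    rw [hfd (Λ x - Λ xbar)] at this
    simpa [Pi.sub_apply] using this
  -- sum expansions
  have hsum1 : ∀ u : Fin n → ℝ,
      u ⬝ᵥ Gm *ᵥ u = u ⬝ᵥ A *ᵥ u + ∑ k, σbar k * (u ⬝ᵥ (B k) *ᵥ u) := by
    intro u
    rw [hGm, hG]
    simp only []
    rw [Matrix.add_mulVec, dotProduct_add]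
    congr 1
    rw [sum_mulVec_aux, dotProduct_sum_aux]
    exact Finset.sum_congr rfl fun k _ => by
      rw [Matrix.smul_mulVec, dotProduct_smul, smul_eq_mul]
  have hsum2 : ∀ u : Fin n → ℝ,
      F σbar ⬝ᵥ u = f ⬝ᵥ u - ∑ k, σbar k * ((b k) ⬝ᵥ u) := by
    intro u
    rw [hF]
    simp only []
    rw [sub_dotProduct]
    congr 1
    rw [sum_dotProduct_aux]
    exact Finset.sum_congr rfl fun k _ => by rw [smul_dotProduct, smul_eq_mul]
  -- the key algebraic identity for the sum of Λ-values
  have hexp : ∀ u : Fin n → ℝ, ∑ k, (Λ u k) * σbar k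
      = (1/2) * (u ⬝ᵥ Gm *ᵥ u) - (1/2) * (u ⬝ᵥ A *ᵥ u) + (f ⬝ᵥ u - F σbar ⬝ᵥ u) := by
    intro u
    rw [hΛ]
    simp only []
    have : ∑ k, ((1/2) * (u ⬝ᵥ (B k) *ᵥ u) + (b k) ⬝ᵥ u) * σbar k
        = (1/2) * (∑ k, σbar k * (u ⬝ᵥ (B k) *ᵥ u)) + ∑ k, σbar k * ((b k) ⬝ᵥ u) := by
      rw [Finset.mul_sum, ← Finset.sum_add_distrib]
      exact Finset.sum_congr rfl fun k _ => by ring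
    rw [this]
    have h1 := hsum1 u
    have h2 := hsum2 u
    linarith
  -- split the sum over the difference
  have hsplit : ∑ k, (Λ x k - Λ xbar k) * σbar k
      = (∑ k, (Λ x k) * σbar k) - ∑ k, (Λ xbar k) * σbar k := by
    rw [← Finset.sum_sub_distrib]
    exact Finset.sum_congr rfl fun k _ => by ring
  -- positive semidefiniteness
  have hq : 0 ≤ (x - xbar) ⬝ᵥ Gm *ᵥ (x - xbar) := by
    simpa using hpsd.dotProduct_mulVec_nonneg (x - xbar)
  have hqexp : (x - xbar) ⬝ᵥ Gm *ᵥ (x - xbar)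
      = x ⬝ᵥ Gm *ᵥ x - 2 * (x ⬝ᵥ Gm *ᵥ xbar) + xbar ⬝ᵥ Gm *ᵥ xbar := by
    rw [Matrix.mulVec_sub, sub_dotProduct, dotProduct_sub,
      dotProduct_sub, hswap xbar x]
    ring
  -- relate F σbar ⬝ᵥ u to Gm via heq
  have hFx : F σbar ⬝ᵥ x = x ⬝ᵥ Gm *ᵥ xbar := by
    rw [← heq, dotProduct_comm]
  have hFxbar : F σbar ⬝ᵥ xbar = xbar ⬝ᵥ Gm *ᵥ xbar := by
    rw [← heq, dotProduct_comm]
  -- assemble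
  rw [hPr]
  simp only []
  have hfx : x ⬝ᵥ f = f ⬝ᵥ x := dotProduct_comm _ _
  have hfxbar : xbar ⬝ᵥ f = f ⬝ᵥ xbar := dotProduct_comm _ _
  have hex := hexp x
  have hexb := hexp xbar
  nlinarith [hgrad, hsplit, hq, hqexp, hFx, hFxbar]
end

section
/- Hessian of the canonical dual: at a critical point σ̄ with G(σ̄) invertible and x̄ = G(σ̄)⁻¹F(σ̄), the Hessian of Π^d(σ) = -½⟨G(σ)⁻¹F(σ),F(σ)⟩ - V*(σ) equals -(∇Λ(x̄))^T G(σ̄)⁻¹ ∇Λ(x̄) - ∇²V*(σ̄), where ∇Λ(x̄) is the n×m matrix with k-th column B^k x̄ + b_k. -/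
open Matrix

lemma isOpen_isUnit_det {n m : ℕ} (A : Matrix (Fin n) (Fin n) ℝ)
    (B : Fin m → Matrix (Fin n) (Fin n) ℝ) :
    IsOpen {τ : Fin m → ℝ | IsUnit (A + ∑ k, τ k • B k).det} := by
  have hcont : Continuous fun τ : Fin m → ℝ => (A + ∑ k, τ k • B k).det := by
    apply Continuous.matrix_det
    refine continuous_matrix fun i j => ?_
    simp only [Matrix.add_apply, Matrix.sum_apply, Matrix.smul_apply, smul_eq_mul]
    fun_prop
  have hset : {τ : Fin m → ℝ | IsUnit (A + ∑ k, τ k • B k).det}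
      = (fun τ : Fin m → ℝ => (A + ∑ k, τ k • B k).det) ⁻¹' ({0}ᶜ) := by
    ext τ; simp [isUnit_iff_ne_zero]
  rw [hset]
  exact hcont.isOpen_preimage _ isOpen_compl_singleton

attribute [local instance] Matrix.linftyOpNormedRing Matrix.linftyOpNormedAlgebra

section AuxDefs

variable {n m : ℕ}

/-- `mulVec` as a continuous bilinear map. -/
noncomputable def mulVecCLM (n : ℕ) :
    Matrix (Fin n) (Fin n) ℝ →L[ℝ] (Fin n → ℝ) →L[ℝ] (Fin n → ℝ) :=
  LinearMap.toContinuousLinearMap <|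
    (LinearMap.toContinuousLinearMap :
        ((Fin n → ℝ) →ₗ[ℝ] (Fin n → ℝ)) ≃ₗ[ℝ] _).toLinearMap.comp <|
      LinearMap.mk₂ ℝ Matrix.mulVec
        (fun M N v => by simp [Matrix.add_mulVec])
        (fun c M v => by simp [Matrix.smul_mulVec])
        (fun M v w => by simp [Matrix.mulVec_add])
        (fun c M v => by simp [Matrix.mulVec_smul])

@[simp] lemma mulVecCLM_apply (M : Matrix (Fin n) (Fin n) ℝ) (v : Fin n → ℝ) :
    mulVecCLM n M v = M *ᵥ v := rfl

/-- `dotProduct` as a continuous bilinear map. -/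
noncomputable def dotCLM (n : ℕ) :
    (Fin n → ℝ) →L[ℝ] (Fin n → ℝ) →L[ℝ] ℝ :=
  LinearMap.toContinuousLinearMap <|
    (LinearMap.toContinuousLinearMap :
        ((Fin n → ℝ) →ₗ[ℝ] ℝ) ≃ₗ[ℝ] _).toLinearMap.comp <|
      LinearMap.mk₂ ℝ dotProduct
        (fun u v w => add_dotProduct u v w)
        (fun c v w => smul_dotProduct c v w)
        (fun u v w => dotProduct_add u v w)
        (fun c v w => dotProduct_smul c v w)

@[simp] lemma dotCLM_apply (v w : Fin n → ℝ) : dotCLM n v w = v ⬝ᵥ w := rfl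

variable (B : Fin m → Matrix (Fin n) (Fin n) ℝ) (b : Fin m → Fin n → ℝ)

/-- The linear map `v ↦ ∑ k, v k • B k`. -/
noncomputable def dGc : (Fin m → ℝ) →L[ℝ] Matrix (Fin n) (Fin n) ℝ :=
  LinearMap.toContinuousLinearMap
    { toFun := fun v => ∑ k, v k • B k
      map_add' := fun u v => by simp [add_smul, Finset.sum_add_distrib]
      map_smul' := fun c v => by simp [Finset.smul_sum, smul_smul] }

@[simp] lemma dGc_apply (v : Fin m → ℝ) : dGc B v = ∑ k, v k • B k := rfl

/-- The linear map `v ↦ ∑ k, v k • b k`. -/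
noncomputable def dbc : (Fin m → ℝ) →L[ℝ] (Fin n → ℝ) :=
  LinearMap.toContinuousLinearMap
    { toFun := fun v => ∑ k, v k • b k
      map_add' := fun u v => by simp [add_smul, Finset.sum_add_distrib]
      map_smul' := fun c v => by simp [Finset.smul_sum, smul_smul] }

@[simp] lemma dbc_apply (v : Fin m → ℝ) : dbc b v = ∑ k, v k • b k := rfl

@[simp] lemma sum_single_smul {M : Type*} [AddCommMonoid M] [Module ℝ M]
    (c : Fin m → M) (k : Fin m) : (∑ j, (Pi.single k 1 : Fin m → ℝ) j • c j) = c k := by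
  rw [Finset.sum_eq_single k]
  · simp
  · intro j _ hj; simp [Pi.single_apply, hj]
  · simp

end AuxDefs

section Deriv

variable {n m : ℕ} (A : Matrix (Fin n) (Fin n) ℝ) (B : Fin m → Matrix (Fin n) (Fin n) ℝ)
  (b : Fin m → Fin n → ℝ) (f : Fin n → ℝ)

theorem hasFDerivAt_xmap (σ : Fin m → ℝ)
    (hu : IsUnit (A + ∑ k, σ k • B k).det) :
    ∃ D : (Fin m → ℝ) →L[ℝ] (Fin n → ℝ),
      HasFDerivAt (fun τ => (A + ∑ k, τ k • B k)⁻¹ *ᵥ (f - ∑ k, τ k • b k)) D σ ∧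
      ∀ v, D v = -((A + ∑ k, σ k • B k)⁻¹ *ᵥ
        ((∑ k, v k • B k) *ᵥ ((A + ∑ k, σ k • B k)⁻¹ *ᵥ (f - ∑ k, σ k • b k))
          + ∑ k, v k • b k)) := by
  set Gm : (Fin m → ℝ) → Matrix (Fin n) (Fin n) ℝ := fun τ => A + ∑ k, τ k • B k with hGm
  set Fm : (Fin m → ℝ) → (Fin n → ℝ) := fun τ => f - ∑ k, τ k • b k with hFm
  have huG : IsUnit (Gm σ) := (Matrix.isUnit_iff_isUnit_det _).mpr hu
  set N : Matrix (Fin n) (Fin n) ℝ := (Gm σ)⁻¹ with hN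
  have hNeq : (↑huG.unit⁻¹ : Matrix (Fin n) (Fin n) ℝ) = N := by
    rw [hN, Matrix.nonsing_inv_eq_ringInverse, ← Ring.inverse_unit huG.unit, huG.unit_spec]
  -- derivative of G
  have hG' : HasFDerivAt Gm (dGc B) σ := by
    have := (dGc B).hasFDerivAt (x := σ)
    exact this.const_add A
  -- derivative of F
  have hF' : HasFDerivAt Fm (-(dbc b)) σ := by
    have := (dbc b).hasFDerivAt (x := σ)
    exact this.const_sub f
  -- derivative of Ring.inverse ∘ G
  have hinv : HasFDerivAt (fun τ => Ring.inverse (Gm τ))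
      ((-((ContinuousLinearMap.mulLeftRight ℝ _) N) N).comp (dGc B)) σ := by
    have h1 := hasFDerivAt_ringInverse (𝕜 := ℝ) huG.unit
    rw [hNeq, huG.unit_spec] at h1
    exact h1.comp σ hG'
  -- derivative of σ ↦ mulVecCLM (Ring.inverse (G σ))
  have hc : HasFDerivAt (fun τ => mulVecCLM n (Ring.inverse (Gm τ)))
      ((mulVecCLM n).comp ((-((ContinuousLinearMap.mulLeftRight ℝ _) N) N).comp (dGc B))) σ :=
    (mulVecCLM n).hasFDerivAt.comp σ hinv
  have hx := hc.clm_apply hF'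
  refine ⟨((mulVecCLM n) (Ring.inverse (Gm σ))).comp (-dbc b) +
      ((mulVecCLM n).comp
        ((-((ContinuousLinearMap.mulLeftRight ℝ (Matrix (Fin n) (Fin n) ℝ)) N) N).comp
          (dGc B))).flip (Fm σ), ?_, ?_⟩
  · exact hx.congr_of_eventuallyEq (Filter.Eventually.of_forall fun τ => by
      simp only [mulVecCLM_apply, Matrix.nonsing_inv_eq_ringInverse]; rfl)
  · intro v
    simp only [ContinuousLinearMap.add_apply, ContinuousLinearMap.comp_apply,
      ContinuousLinearMap.flip_apply, ContinuousLinearMap.neg_apply,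
      ContinuousLinearMap.mulLeftRight_apply, mulVecCLM_apply, dGc_apply, dbc_apply,
      Matrix.nonsing_inv_eq_ringInverse]
    erw [ContinuousLinearMap.comp_apply, ContinuousLinearMap.comp_apply]
    simp only [ContinuousLinearMap.neg_apply, ContinuousLinearMap.mulLeftRight_apply,
      mulVecCLM_apply]
    erw [dGc_apply]
    rw [← Matrix.nonsing_inv_eq_ringInverse]
    simp only [Matrix.neg_mulVec, Matrix.mulVec_neg, Matrix.mulVec_add, ← Matrix.mulVec_mulVec]
    abel
end Deriv

section Inner

variable {n m : ℕ} (A : Matrix (Fin n) (Fin n) ℝ) (B : Fin m → Matrix (Fin n) (Fin n) ℝ)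
  (b : Fin m → Fin n → ℝ) (f : Fin n → ℝ)

lemma dot_symm (M : Matrix (Fin n) (Fin n) ℝ) (hM : Mᵀ = M) (w z : Fin n → ℝ) :
    (M *ᵥ w) ⬝ᵥ z = w ⬝ᵥ (M *ᵥ z) := by
  rw [dotProduct_mulVec, ← Matrix.mulVec_transpose, hM]

lemma Gsymm (hA : Aᵀ = A) (hB : ∀ k, (B k)ᵀ = B k) (σ : Fin m → ℝ) :
    (A + ∑ k, σ k • B k)ᵀ = A + ∑ k, σ k • B k := by
  rw [Matrix.transpose_add, hA, Matrix.transpose_sum]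
  simp only [Matrix.transpose_smul]
  congr 1
  exact Finset.sum_congr rfl fun k _ => by rw [hB k]

theorem fderiv_Pd (Vs : (Fin m → ℝ) → ℝ) (hVs : Differentiable ℝ Vs)
    (hA : Aᵀ = A) (hB : ∀ k, (B k)ᵀ = B k) (σ : Fin m → ℝ)
    (hu : IsUnit (A + ∑ k, σ k • B k).det) (l : Fin m) :
    fderiv ℝ (fun τ => -(1/2) *
        (((A + ∑ k, τ k • B k)⁻¹ *ᵥ (f - ∑ k, τ k • b k)) ⬝ᵥ (f - ∑ k, τ k • b k)) - Vs τ)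
      σ (Pi.single l 1)
    = (1/2) * ((B l *ᵥ ((A + ∑ k, σ k • B k)⁻¹ *ᵥ (f - ∑ k, σ k • b k)))
          ⬝ᵥ ((A + ∑ k, σ k • B k)⁻¹ *ᵥ (f - ∑ k, σ k • b k)))
      + b l ⬝ᵥ ((A + ∑ k, σ k • B k)⁻¹ *ᵥ (f - ∑ k, σ k • b k))
      - fderiv ℝ Vs σ (Pi.single l 1) := by
  obtain ⟨D, hD, hDv⟩ := hasFDerivAt_xmap A B b f σ hu
  set Gm : (Fin m → ℝ) → Matrix (Fin n) (Fin n) ℝ := fun τ => A + ∑ k, τ k • B k with hGm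
  set Fm : (Fin m → ℝ) → (Fin n → ℝ) := fun τ => f - ∑ k, τ k • b k with hFm
  set x : Fin n → ℝ := (Gm σ)⁻¹ *ᵥ Fm σ with hx
  set N : Matrix (Fin n) (Fin n) ℝ := (Gm σ)⁻¹ with hN
  have hNs : Nᵀ = N := by
    rw [hN, Matrix.transpose_nonsing_inv, Gsymm A B hA hB σ]
  have hF' : HasFDerivAt Fm (-(dbc b)) σ := ((dbc b).hasFDerivAt (x := σ)).const_sub f
  have hc : HasFDerivAt (fun τ => dotCLM n ((Gm τ)⁻¹ *ᵥ Fm τ)) ((dotCLM n).comp D) σ :=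
    (dotCLM n).hasFDerivAt.comp σ hD
  have hq := hc.clm_apply hF'
  have hPd : HasFDerivAt
      (fun τ => -(1/2) * (((Gm τ)⁻¹ *ᵥ Fm τ) ⬝ᵥ Fm τ) - Vs τ)
      ((-(1/2) : ℝ) • ((dotCLM n ((Gm σ)⁻¹ *ᵥ Fm σ)).comp (-(dbc b)) +
        ((dotCLM n).comp D).flip (Fm σ)) - fderiv ℝ Vs σ) σ :=
    (hq.const_mul (-(1/2))).sub (hVs σ).hasFDerivAt
  rw [hPd.fderiv]
  have hDl : D (Pi.single l 1) = -(N *ᵥ (B l *ᵥ x + b l)) := by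
    rw [hDv]; simp
  simp only [ContinuousLinearMap.sub_apply, ContinuousLinearMap.smul_apply,
    ContinuousLinearMap.add_apply, ContinuousLinearMap.comp_apply,
    ContinuousLinearMap.flip_apply, ContinuousLinearMap.neg_apply,
    dotCLM_apply, dbc_apply, sum_single_smul, hDl]
  have h1 : (-(N *ᵥ (B l *ᵥ x + b l))) ⬝ᵥ Fm σ = -((B l *ᵥ x + b l) ⬝ᵥ x) := by
    rw [neg_dotProduct, dot_symm N hNs]
  rw [h1]
  simp only [add_dotProduct, dotProduct_neg, smul_eq_mul]
  have h2 : x ⬝ᵥ b l = b l ⬝ᵥ x := dotProduct_comm _ _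
  rw [h2]
  ring

end Inner

/-- Hessian of the canonical dual at a critical point:
`∇²Π^d(σ̄) = -(∇Λ(x̄))ᵀ G(σ̄)⁻¹ ∇Λ(x̄) - ∇²V*(σ̄)`. -/
theorem hessian_dual {n m : ℕ}
    (A : Matrix (Fin n) (Fin n) ℝ) (B : Fin m → Matrix (Fin n) (Fin n) ℝ)
    (b : Fin m → (Fin n → ℝ)) (f : Fin n → ℝ)
    (Vs : (Fin m → ℝ) → ℝ) (hVs : ContDiff ℝ 2 Vs)
    (hA : A.IsSymm) (hB : ∀ k, (B k).IsSymm)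
    (G : (Fin m → ℝ) → Matrix (Fin n) (Fin n) ℝ)
    (hG : G = fun σ => A + ∑ k, σ k • B k)
    (F : (Fin m → ℝ) → (Fin n → ℝ))
    (hF : F = fun σ => f - ∑ k, σ k • b k)
    (Pd : (Fin m → ℝ) → ℝ)
    (hPd : Pd = fun σ => -(1/2) * (((G σ)⁻¹ *ᵥ F σ) ⬝ᵥ F σ) - Vs σ)
    (σbar : Fin m → ℝ) (hGinv : IsUnit (G σbar).det)
    (hcrit : fderiv ℝ Pd σbar = 0)
    (xbar : Fin n → ℝ) (hxbar : xbar = (G σbar)⁻¹ *ᵥ F σbar)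
    -- ∇Λ(x̄) : the n×m matrix whose k-th column is B^k x̄ + b_k
    (L : Matrix (Fin n) (Fin m) ℝ)
    (hL : L = Matrix.of fun i k => ((B k) *ᵥ xbar + b k) i) :
    (Matrix.of fun k l : Fin m =>
        fderiv ℝ (fun σ => fderiv ℝ Pd σ (Pi.single l 1)) σbar (Pi.single k 1)) =
      -(Lᵀ * (G σbar)⁻¹ * L) -
      (Matrix.of fun k l : Fin m =>
        fderiv ℝ (fun σ => fderiv ℝ Vs σ (Pi.single l 1)) σbar (Pi.single k 1)) := by
  have hA' : Aᵀ = A := hA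
  have hB' : ∀ k, (B k)ᵀ = B k := hB
  have hGinv' : IsUnit (A + ∑ k, σbar k • B k).det := by rw [hG] at hGinv; exact hGinv
  subst hL hxbar
  ext k l
  simp only [Matrix.of_apply, Matrix.sub_apply, Matrix.neg_apply]
  simp only [hPd, hG, hF]
  -- eventual equality of inner gradients near σbar
  have hmem : ∀ᶠ τ in nhds σbar, IsUnit (A + ∑ j, τ j • B j).det :=
    (isOpen_isUnit_det A B).eventually_mem hGinv'
  have heq : (fun τ => fderiv ℝ (fun σ => -(1/2) *
        (((A + ∑ j, σ j • B j)⁻¹ *ᵥ (f - ∑ j, σ j • b j)) ⬝ᵥ (f - ∑ j, σ j • b j)) - Vs σ)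
        τ (Pi.single l 1))
      =ᶠ[nhds σbar] fun τ =>
        (1/2) * ((B l *ᵥ ((A + ∑ j, τ j • B j)⁻¹ *ᵥ (f - ∑ j, τ j • b j)))
            ⬝ᵥ ((A + ∑ j, τ j • B j)⁻¹ *ᵥ (f - ∑ j, τ j • b j)))
          + b l ⬝ᵥ ((A + ∑ j, τ j • B j)⁻¹ *ᵥ (f - ∑ j, τ j • b j))
          - fderiv ℝ Vs τ (Pi.single l 1) := by
    filter_upwards [hmem] with τ hτ
    exact fderiv_Pd A B b f Vs (hVs.differentiable (by norm_num)) hA' hB' τ hτ l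
  rw [heq.fderiv_eq]
  -- derivative of the x-map at σbar
  obtain ⟨D0, hD0, hD0v⟩ := hasFDerivAt_xmap A B b f σbar hGinv'
  have h1 := ((dotCLM n).comp ((mulVecCLM n) (B l))).hasFDerivAt.comp σbar hD0
  have h2 := h1.clm_apply hD0
  have h3 := h2.const_mul (1/2 : ℝ)
  have h4 := ((dotCLM n) (b l)).hasFDerivAt.comp σbar hD0
  have hψcd : ContDiff ℝ 1 (fderiv ℝ Vs) := hVs.fderiv_right (by norm_num)
  have hψd : Differentiable ℝ (fun τ => fderiv ℝ Vs τ (Pi.single l 1)) := by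
    have := (ContinuousLinearMap.apply ℝ ℝ (Pi.single l 1)).differentiable.comp
      (hψcd.differentiable one_ne_zero)
    simpa [Function.comp_def] using this
  have hψ := (hψd σbar).hasFDerivAt
  have htot := (h3.add h4).sub hψ
  have htot' : HasFDerivAt (fun τ =>
        (1/2) * ((B l *ᵥ ((A + ∑ j, τ j • B j)⁻¹ *ᵥ (f - ∑ j, τ j • b j)))
            ⬝ᵥ ((A + ∑ j, τ j • B j)⁻¹ *ᵥ (f - ∑ j, τ j • b j)))
          + b l ⬝ᵥ ((A + ∑ j, τ j • B j)⁻¹ *ᵥ (f - ∑ j, τ j • b j))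
          - fderiv ℝ Vs τ (Pi.single l 1)) _ σbar := htot
  rw [htot'.fderiv]
  -- notation
  set N : Matrix (Fin n) (Fin n) ℝ := (A + ∑ j, σbar j • B j)⁻¹ with hN
  set X : Fin n → ℝ := N *ᵥ (f - ∑ j, σbar j • b j) with hX
  have hNs : Nᵀ = N := by
    rw [hN, Matrix.transpose_nonsing_inv, Gsymm A B hA' hB' σbar]
  have hDk : D0 (Pi.single k 1) = -(N *ᵥ (B k *ᵥ X + b k)) := by
    rw [hD0v]; simp
  simp only [ContinuousLinearMap.sub_apply, ContinuousLinearMap.add_apply,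
    ContinuousLinearMap.smul_apply, ContinuousLinearMap.comp_apply,
    ContinuousLinearMap.flip_apply, Function.comp_apply, dotCLM_apply, mulVecCLM_apply,
    hDk, smul_eq_mul, ← hN, ← hX]
  -- the matrix entry on the RHS
  have hM : ((Matrix.of fun i j => (B j *ᵥ X + b j) i)ᵀ * N *
        (Matrix.of fun i j => (B j *ᵥ X + b j) i)) k l
      = (B k *ᵥ X + b k) ⬝ᵥ (N *ᵥ (B l *ᵥ X + b l)) := by
    simp only [Matrix.mul_apply, Matrix.transpose_apply, Matrix.of_apply, Matrix.mulVec,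
      dotProduct, Finset.sum_mul, Finset.mul_sum]
    rw [Finset.sum_comm]
    refine Finset.sum_congr rfl fun i _ => Finset.sum_congr rfl fun j _ => by ring
  rw [hM]
  -- algebraic identities
  have e1 : (B l *ᵥ (-(N *ᵥ (B k *ᵥ X + b k)))) ⬝ᵥ X
      = (B l *ᵥ X) ⬝ᵥ (-(N *ᵥ (B k *ᵥ X + b k))) := by
    rw [dot_symm (B l) (hB' l), dotProduct_comm]
  have e2 : (B l *ᵥ X) ⬝ᵥ (-(N *ᵥ (B k *ᵥ X + b k)))
        + b l ⬝ᵥ (-(N *ᵥ (B k *ᵥ X + b k)))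
      = -((B k *ᵥ X + b k) ⬝ᵥ (N *ᵥ (B l *ᵥ X + b l))) := by
    rw [dotProduct_neg, dotProduct_neg, ← neg_add, ← add_dotProduct]
    rw [dotProduct_comm, dot_symm N hNs]
  rw [e1]
  linarith [e2]
end

section
/- Eigenvalue-counting lemma (Lemma 1 of the paper, m < n): let G be symmetric negative definite n×n, R invertible m×m, and L ∈ ℝ^{n×m} with -L^T G⁻¹ L - R^T R ≻ 0. Then the symmetric matrix H := G + L (R^T R)⁻¹ L^T has exactly m positive eigenvalues and n - m negative eigenvalues (counted with multiplicity); in particular there exist P♭ ∈ ℝ^{n×m} and P♯ ∈ ℝ^{n×(n-m)} with P♭^T H P♭ ≻ 0 and P♯^T H P♯ ≺ 0. -/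
open Matrix

section EigHelpers

lemma quad_eq_sum {n : ℕ} {N : Matrix (Fin n) (Fin n) ℝ} (hN : N.IsHermitian) (y : Fin n → ℝ) :
    y ⬝ᵥ (N *ᵥ y) = ∑ i, hN.eigenvalues i *
      (((star (hN.eigenvectorUnitary : Matrix (Fin n) (Fin n) ℝ)) *ᵥ y) i)^2 := by
  set U := (hN.eigenvectorUnitary : Matrix (Fin n) (Fin n) ℝ) with hU
  have hstar : star U = Uᵀ := by
    rw [star_eq_conjTranspose, conjTranspose_eq_transpose_of_trivial]
  set c := star U *ᵥ y with hc
  conv_lhs => rw [hN.spectral_theorem, Unitary.conjStarAlgAut_apply]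
  rw [← Matrix.mulVec_mulVec, ← Matrix.mulVec_mulVec, dotProduct_mulVec]
  have h1 : y ᵥ* U = c := by rw [hc, hstar, mulVec_transpose]
  rw [h1]
  have h2 : (star U) *ᵥ y = c := rfl
  rw [h2]
  simp only [dotProduct, mulVec_diagonal, Function.comp_apply, RCLike.ofReal_real_eq_id, id_eq]
  exact Finset.sum_congr rfl fun i _ => by ring

lemma quad_pos_dim_le {n k : ℕ} {N : Matrix (Fin n) (Fin n) ℝ} (hN : N.IsHermitian)
    (P : Matrix (Fin n) (Fin k) ℝ) (hP : (Pᵀ * N * P).PosDef) :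
    k ≤ (Finset.univ.filter fun i => 0 < hN.eigenvalues i).card := by
  set U := (hN.eigenvectorUnitary : Matrix (Fin n) (Fin n) ℝ)
  set ψ : (Fin k → ℝ) →ₗ[ℝ] ({i // 0 < hN.eigenvalues i} → ℝ) :=
    (LinearMap.funLeft ℝ ℝ (Subtype.val)) ∘ₗ (star U * P).mulVecLin with hψ
  have hker : ∀ x, ψ x = 0 → x = 0 := by
    intro x hx
    by_contra hx0
    have hpos : 0 < x ⬝ᵥ ((Pᵀ * N * P) *ᵥ x) := by
      have := hP.dotProduct_mulVec_pos hx0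
      rwa [star_trivial] at this
    have hform : x ⬝ᵥ ((Pᵀ * N * P) *ᵥ x) = (P *ᵥ x) ⬝ᵥ (N *ᵥ (P *ᵥ x)) := by
      rw [← Matrix.mulVec_mulVec, ← Matrix.mulVec_mulVec, dotProduct_mulVec, vecMul_transpose]
    set y := P *ᵥ x with hy
    have hcc : star U *ᵥ y = (star U * P) *ᵥ x := by rw [← Matrix.mulVec_mulVec]
    have hzero : ∀ i, 0 < hN.eigenvalues i → ((star U) *ᵥ y) i = 0 := by
      intro i hi
      have := congrFun hx ⟨i, hi⟩
      simpa [hψ, hcc] using this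
    have hle : y ⬝ᵥ (N *ᵥ y) ≤ 0 := by
      rw [quad_eq_sum hN y]
      apply Finset.sum_nonpos
      intro i _
      by_cases hi : 0 < hN.eigenvalues i
      · rw [hzero i hi]; simp
      · push_neg at hi
        exact mul_nonpos_of_nonpos_of_nonneg hi (sq_nonneg _)
    rw [hform] at hpos
    linarith
  have hinj : Function.Injective ψ :=
    LinearMap.ker_eq_bot.mp (LinearMap.ker_eq_bot'.mpr hker)
  have := LinearMap.finrank_le_finrank_of_injective hinj
  simpa [Module.finrank_pi, Fintype.card_subtype] using this

lemma quad_neg_dim_le {n k : ℕ} {N : Matrix (Fin n) (Fin n) ℝ} (hN : N.IsHermitian)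
    (P : Matrix (Fin n) (Fin k) ℝ) (hP : (-(Pᵀ * N * P)).PosDef) :
    k ≤ (Finset.univ.filter fun i => hN.eigenvalues i < 0).card := by
  set U := (hN.eigenvectorUnitary : Matrix (Fin n) (Fin n) ℝ)
  set ψ : (Fin k → ℝ) →ₗ[ℝ] ({i // hN.eigenvalues i < 0} → ℝ) :=
    (LinearMap.funLeft ℝ ℝ (Subtype.val)) ∘ₗ (star U * P).mulVecLin with hψ
  have hker : ∀ x, ψ x = 0 → x = 0 := by
    intro x hx
    by_contra hx0
    have hpos : 0 < x ⬝ᵥ ((-(Pᵀ * N * P)) *ᵥ x) := by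
      have := hP.dotProduct_mulVec_pos hx0
      rwa [star_trivial] at this
    have hform : x ⬝ᵥ ((Pᵀ * N * P) *ᵥ x) = (P *ᵥ x) ⬝ᵥ (N *ᵥ (P *ᵥ x)) := by
      rw [← Matrix.mulVec_mulVec, ← Matrix.mulVec_mulVec, dotProduct_mulVec, vecMul_transpose]
    rw [neg_mulVec, dotProduct_neg, hform] at hpos
    set y := P *ᵥ x with hy
    have hcc : star U *ᵥ y = (star U * P) *ᵥ x := by rw [← Matrix.mulVec_mulVec]
    have hzero : ∀ i, hN.eigenvalues i < 0 → ((star U) *ᵥ y) i = 0 := by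
      intro i hi
      have := congrFun hx ⟨i, hi⟩
      simpa [hψ, hcc] using this
    have hle : 0 ≤ y ⬝ᵥ (N *ᵥ y) := by
      rw [quad_eq_sum hN y]
      apply Finset.sum_nonneg
      intro i _
      by_cases hi : hN.eigenvalues i < 0
      · rw [hzero i hi]; simp
      · push_neg at hi
        exact mul_nonneg hi (sq_nonneg _)
    linarith
  have hinj : Function.Injective ψ :=
    LinearMap.ker_eq_bot.mp (LinearMap.ker_eq_bot'.mpr hker)
  have := LinearMap.finrank_le_finrank_of_injective hinj
  simpa [Module.finrank_pi, Fintype.card_subtype] using this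

end EigHelpers

/-- Eigenvalue-counting lemma (Lemma 1, m < n): under the dual second-order
condition, `H := G + L (RᵀR)⁻¹ Lᵀ` has exactly `m` positive and `n - m` negative
eigenvalues, and admits subspaces of positivity and negativity of those dimensions. -/
theorem eigenvalue_counting_primal {n m : ℕ} (hmn : m < n)
    (G : Matrix (Fin n) (Fin n) ℝ) (R : Matrix (Fin m) (Fin m) ℝ)
    (L : Matrix (Fin n) (Fin m) ℝ)
    (hG : (-G).PosDef) (hR : IsUnit R.det)
    (hdual : (-(Lᵀ * G⁻¹ * L) - Rᵀ * R).PosDef) :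
    ∃ hH : (G + L * (Rᵀ * R)⁻¹ * Lᵀ).IsHermitian,
      (Finset.univ.filter fun i => 0 < hH.eigenvalues i).card = m ∧
      (Finset.univ.filter fun i => hH.eigenvalues i < 0).card = n - m ∧
      ∃ (Pflat : Matrix (Fin n) (Fin m) ℝ) (Psharp : Matrix (Fin n) (Fin (n - m)) ℝ),
        (Pflatᵀ * (G + L * (Rᵀ * R)⁻¹ * Lᵀ) * Pflat).PosDef ∧
        (-(Psharpᵀ * (G + L * (Rᵀ * R)⁻¹ * Lᵀ) * Psharp)).PosDef := by
  set C : Matrix (Fin m) (Fin m) ℝ := Rᵀ * R with hCdef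
  set H : Matrix (Fin n) (Fin n) ℝ := G + L * C⁻¹ * Lᵀ with hHdef
  -- basic facts
  have hGherm : G.IsHermitian := by
    have h := hG.1
    rw [IsHermitian, conjTranspose_neg, neg_inj] at h
    exact h
  have hGsym : Gᵀ = G := by
    have := hGherm
    rwa [IsHermitian, conjTranspose_eq_transpose_of_trivial] at this
  have hGdet : IsUnit G.det := by
    have h1 : (-G).det ≠ 0 := hG.det_pos.ne'
    have h2 : (-G).det = (-1 : ℝ)^n * G.det := by
      simpa using Matrix.det_neg G
    refine isUnit_iff_ne_zero.mpr fun h0 => h1 ?_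
    rw [h2, h0, mul_zero]
  -- C is positive definite
  have hRinj : Function.Injective (R.mulVec) :=
    Matrix.mulVec_injective_iff_isUnit.mpr ((Matrix.isUnit_iff_isUnit_det R).mpr hR)
  have hC : C.PosDef := by
    refine Matrix.PosDef.of_dotProduct_mulVec_pos ?_ fun x hx => ?_
    · have h := (Matrix.posSemidef_conjTranspose_mul_self R).1
      rwa [conjTranspose_eq_transpose_of_trivial] at h
    · have hRx : R *ᵥ x ≠ 0 := fun h0 => hx (hRinj (by simpa using h0))
      have : x ⬝ᵥ ((Rᵀ * R) *ᵥ x) = (R *ᵥ x) ⬝ᵥ (R *ᵥ x) := by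
        rw [← Matrix.mulVec_mulVec, dotProduct_mulVec, vecMul_transpose]
      rw [star_trivial, hCdef, this]
      have h4 : 0 < dotProduct (star (R *ᵥ x)) (R *ᵥ x) :=
        dotProduct_star_self_pos_iff.mpr hRx
      simpa using h4
  have hCdet : IsUnit C.det := hC.det_pos.ne'.isUnit
  have hCsym : Cᵀ = C := by
    have := hC.1
    rwa [IsHermitian, conjTranspose_eq_transpose_of_trivial] at this
  -- H is hermitian
  have hH : H.IsHermitian := by
    have h2 : ((C)⁻¹).IsHermitian := hC.1.inv
    have h3 := Matrix.isHermitian_conjTranspose_mul_mul Lᵀ h2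
    rw [conjTranspose_eq_transpose_of_trivial, transpose_transpose] at h3
    exact hGherm.add h3
  -- the dual Schur complement
  set T : Matrix (Fin m) (Fin m) ℝ := -(Lᵀ * G⁻¹ * L) - C with hTdef
  have hTsym : Tᵀ = T := by
    have := hdual.1
    rwa [IsHermitian, conjTranspose_eq_transpose_of_trivial] at this
  -- Pflat
  have hGinvT : (G⁻¹)ᵀ = G⁻¹ := by rw [transpose_nonsing_inv, hGsym]
  set Pflat : Matrix (Fin n) (Fin m) ℝ := G⁻¹ * L with hPflat
  have key : Pflatᵀ * H * Pflat = T + T * C⁻¹ * T := by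
    rw [hPflat, hHdef, hTdef, transpose_mul, hGinvT]
    simp only [Matrix.mul_add, Matrix.add_mul, Matrix.sub_mul, Matrix.mul_sub,
      Matrix.neg_mul, Matrix.mul_neg, Matrix.mul_assoc,
      Matrix.nonsing_inv_mul_cancel_left _ _ hGdet,
      Matrix.mul_nonsing_inv_cancel_left _ _ hGdet,
      Matrix.nonsing_inv_mul_cancel_left _ _ hCdet,
      Matrix.mul_nonsing_inv_cancel_left _ _ hCdet,
      Matrix.nonsing_inv_mul _ hCdet, Matrix.mul_nonsing_inv _ hCdet, Matrix.mul_one,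
      Matrix.one_mul]
    abel
  have hflat : (Pflatᵀ * H * Pflat).PosDef := by
    rw [key]
    have hsemi : (T * C⁻¹ * T).PosSemidef := by
      have := (hC.inv.posSemidef).conjTranspose_mul_mul_same T
      rwa [conjTranspose_eq_transpose_of_trivial, hTsym] at this
    exact hdual.add_posSemidef hsemi
  -- Psharp : from the kernel of Lᵀ
  set K : Submodule ℝ (Fin n → ℝ) := LinearMap.ker (Lᵀ).mulVecLin with hKdef
  have hKrank : n - m ≤ Module.finrank ℝ K := by
    have h1 := LinearMap.finrank_range_add_finrank_ker (Lᵀ).mulVecLin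
    rw [← hKdef] at h1
    have h2 : Module.finrank ℝ (LinearMap.range (Lᵀ).mulVecLin) ≤ m := by
      have := Matrix.rank_le_card_height (Lᵀ)
      simpa [Matrix.rank] using this
    have h3 : Module.finrank ℝ (Fin n → ℝ) = n := Module.finrank_fin_fun ℝ
    omega
  let b : Module.Basis (Fin (Module.finrank ℝ K)) ℝ K := Module.finBasis ℝ K
  set Psharp : Matrix (Fin n) (Fin (n - m)) ℝ :=
    Matrix.of (fun i j => (b (Fin.castLE hKrank j) : Fin n → ℝ) i) with hPsharp
  have hPs_mulVec : ∀ x : Fin (n - m) → ℝ,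
      Psharp *ᵥ x = ((∑ j, x j • b (Fin.castLE hKrank j) : K) : Fin n → ℝ) := by
    intro x
    have hcoe : ((∑ j, x j • b (Fin.castLE hKrank j) : K) : Fin n → ℝ)
        = ∑ j, x j • ((b (Fin.castLE hKrank j) : K) : Fin n → ℝ) := by
      rw [Submodule.coe_sum]
      simp [Submodule.coe_smul]
    rw [hcoe]
    funext i
    rw [hPsharp]
    simp only [mulVec, dotProduct, Matrix.of_apply, Finset.sum_apply, Pi.smul_apply,
      smul_eq_mul]
    exact Finset.sum_congr rfl fun j _ => mul_comm _ _
  have hLI : LinearIndependent ℝ (fun j : Fin (n - m) => b (Fin.castLE hKrank j)) :=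
    b.linearIndependent.comp _ (Fin.castLE_injective hKrank)
  have hPs_ne : ∀ x : Fin (n - m) → ℝ, x ≠ 0 → Psharp *ᵥ x ≠ 0 := by
    intro x hx h0
    rw [hPs_mulVec] at h0
    have hz : (∑ j, x j • b (Fin.castLE hKrank j) : K) = 0 := by
      exact_mod_cast Subtype.ext h0
    have := (Fintype.linearIndependent_iff.mp hLI) x hz
    exact hx (funext this)
  have hPs_ker : ∀ x : Fin (n - m) → ℝ, Lᵀ *ᵥ (Psharp *ᵥ x) = 0 := by
    intro x
    rw [hPs_mulVec]
    have hmem := Submodule.coe_mem (∑ j, x j • b (Fin.castLE hKrank j))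
    have h5 : (Lᵀ).mulVecLin ((∑ j, x j • b (Fin.castLE hKrank j) : K) : Fin n → ℝ) = 0 :=
      LinearMap.mem_ker.mp hmem
    rwa [Matrix.mulVecLin_apply] at h5
  have hsharp : (-(Psharpᵀ * H * Psharp)).PosDef := by
    refine Matrix.PosDef.of_dotProduct_mulVec_pos ?_ fun x hx => ?_
    · have h1 := Matrix.isHermitian_conjTranspose_mul_mul Psharp hH
      rw [conjTranspose_eq_transpose_of_trivial] at h1
      exact h1.neg
    · rw [star_trivial, neg_mulVec, dotProduct_neg]
      have hform : x ⬝ᵥ ((Psharpᵀ * H * Psharp) *ᵥ x) = (Psharp *ᵥ x) ⬝ᵥ (H *ᵥ (Psharp *ᵥ x)) := by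
        rw [← Matrix.mulVec_mulVec, ← Matrix.mulVec_mulVec, dotProduct_mulVec, vecMul_transpose]
      set y := Psharp *ᵥ x with hy
      have hyne : y ≠ 0 := hPs_ne x hx
      have hHy : y ⬝ᵥ (H *ᵥ y) = y ⬝ᵥ (G *ᵥ y) := by
        rw [hHdef, add_mulVec, dotProduct_add]
        have : (L * C⁻¹ * Lᵀ) *ᵥ y = 0 := by
          rw [← Matrix.mulVec_mulVec, ← Matrix.mulVec_mulVec, hPs_ker x, mulVec_zero, mulVec_zero]
        rw [this, dotProduct_zero, add_zero]
      have hGy : 0 < y ⬝ᵥ ((-G) *ᵥ y) := by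
        have := hG.dotProduct_mulVec_pos hyne
        rwa [star_trivial] at this
      rw [neg_mulVec, dotProduct_neg] at hGy
      rw [hform, hHy]
      linarith
  -- counting
  have hple := quad_pos_dim_le hH Pflat hflat
  have hqle := quad_neg_dim_le hH Psharp hsharp
  have hsum : (Finset.univ.filter fun i => 0 < hH.eigenvalues i).card +
      (Finset.univ.filter fun i => hH.eigenvalues i < 0).card ≤ n := by
    have hdisj : Disjoint (Finset.univ.filter fun i => 0 < hH.eigenvalues i)
        (Finset.univ.filter fun i => hH.eigenvalues i < 0) := by
      rw [Finset.disjoint_filter]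
      intro i _ h1 h2
      linarith
    calc (Finset.univ.filter fun i => 0 < hH.eigenvalues i).card +
        (Finset.univ.filter fun i => hH.eigenvalues i < 0).card
        = ((Finset.univ.filter fun i => 0 < hH.eigenvalues i) ∪
          (Finset.univ.filter fun i => hH.eigenvalues i < 0)).card :=
          (Finset.card_union_of_disjoint hdisj).symm
      _ ≤ (Finset.univ : Finset (Fin n)).card := Finset.card_le_univ _
      _ = n := Finset.card_fin n
  refine ⟨hH, by omega, by omega, Pflat, Psharp, hflat, hsharp⟩
end

section
/- Dual-side eigenvalue counting (Lemma 2, m > n): let G be symmetric negative definite n×n, C symmetric positive definite m×m, L ∈ ℝ^{n×m}, and suppose H_p := G + L C⁻¹ L^T ≻ 0. Then the symmetric m×m matrix H_d := -L^T G⁻¹ L - C has exactly n positive and m - n negative eigenvalues; in particular there exist Q♭ ∈ ℝ^{m×n} and Q♯ ∈ ℝ^{m×(m-n)} with Q♭^T H_d Q♭ ≻ 0 and Q♯^T H_d Q♯ ≺ 0. -/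
open Matrix

private lemma quad_eq_sum_s17 {m d : ℕ} (A : Matrix (Fin m) (Fin m) ℝ) (hA : A.IsHermitian)
    (Q : Matrix (Fin m) (Fin d) ℝ) (y : Fin d → ℝ) :
    y ⬝ᵥ ((Qᵀ * A * Q) *ᵥ y) =
      ∑ i, hA.eigenvalues i *
        (((star (hA.eigenvectorUnitary : Matrix (Fin m) (Fin m) ℝ)) * Q) *ᵥ y) i ^ 2 := by
  set U : Matrix (Fin m) (Fin m) ℝ := (hA.eigenvectorUnitary : Matrix (Fin m) (Fin m) ℝ)
  set R : Matrix (Fin m) (Fin d) ℝ := star U * Q with hR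
  have hD : (RCLike.ofReal ∘ hA.eigenvalues : Fin m → ℝ) = hA.eigenvalues := by
    funext i; simp
  have hAeq : A = U * diagonal hA.eigenvalues * star U := by
    conv_lhs => rw [hA.spectral_theorem]
    rw [hD]
    rw [Unitary.conjStarAlgAut_apply]
  have hQt : Qᵀ * A * Q = Rᵀ * diagonal hA.eigenvalues * R := by
    conv_lhs => rw [hAeq]
    rw [hR]
    have h2 : (star U : Matrix (Fin m) (Fin m) ℝ)ᵀ = U := by
      simp [star_eq_conjTranspose]
    rw [transpose_mul, h2]
    simp only [Matrix.mul_assoc]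
  rw [hQt]
  rw [← mulVec_mulVec, ← mulVec_mulVec, dotProduct_mulVec, vecMul_transpose]
  simp [dotProduct, mulVec_diagonal]
  exact Finset.sum_congr rfl fun i _ => by ring

private lemma exists_kernel_vec {m d : ℕ} (R : Matrix (Fin m) (Fin d) ℝ) (P : Finset (Fin m))
    (h : P.card < d) : ∃ y : Fin d → ℝ, y ≠ 0 ∧ ∀ i ∈ P, (R *ᵥ y) i = 0 := by
  classical
  set φ : (Fin d → ℝ) →ₗ[ℝ] ({i // i ∈ P} → ℝ) :=
    (LinearMap.funLeft ℝ ℝ (fun i : {i // i ∈ P} => (i : Fin m))).comp R.mulVecLin with hφ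
  by_cases hinj : Function.Injective φ
  · exfalso
    have hle := LinearMap.finrank_le_finrank_of_injective hinj
    simp only [Module.finrank_pi, Fintype.card_fin] at hle
    rw [Fintype.card_coe] at hle
    omega
  · rw [← LinearMap.ker_eq_bot] at hinj
    obtain ⟨y, hyk, hy0⟩ := (Submodule.ne_bot_iff _).mp hinj
    refine ⟨y, hy0, fun i hi => ?_⟩
    have := congrFun (LinearMap.mem_ker.mp hyk) ⟨i, hi⟩
    simpa [hφ, LinearMap.funLeft] using this

private lemma count_pos_ge {m d : ℕ} (A : Matrix (Fin m) (Fin m) ℝ) (hA : A.IsHermitian)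
    (Q : Matrix (Fin m) (Fin d) ℝ) (hQ : (Qᵀ * A * Q).PosDef) :
    d ≤ (Finset.univ.filter fun i => 0 < hA.eigenvalues i).card := by
  by_contra hcon
  push_neg at hcon
  obtain ⟨y, hy0, hyk⟩ :=
    exists_kernel_vec (star (hA.eigenvectorUnitary : Matrix (Fin m) (Fin m) ℝ) * Q)
      (Finset.univ.filter fun i => 0 < hA.eigenvalues i) hcon
  have hpos := hQ.dotProduct_mulVec_pos hy0
  rw [star_trivial] at hpos
  rw [quad_eq_sum_s17 A hA Q y] at hpos
  have hnp : (∑ i, hA.eigenvalues i *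
      (((star (hA.eigenvectorUnitary : Matrix (Fin m) (Fin m) ℝ)) * Q) *ᵥ y) i ^ 2) ≤ 0 := by
    apply Finset.sum_nonpos
    intro i _
    by_cases hi : 0 < hA.eigenvalues i
    · rw [hyk i (by simp [hi])]; simp
    · exact mul_nonpos_of_nonpos_of_nonneg (le_of_not_gt hi) (sq_nonneg _)
  linarith

private lemma count_neg_ge {m d : ℕ} (A : Matrix (Fin m) (Fin m) ℝ) (hA : A.IsHermitian)
    (Q : Matrix (Fin m) (Fin d) ℝ) (hQ : (-(Qᵀ * A * Q)).PosDef) :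
    d ≤ (Finset.univ.filter fun i => hA.eigenvalues i < 0).card := by
  by_contra hcon
  push_neg at hcon
  obtain ⟨y, hy0, hyk⟩ :=
    exists_kernel_vec (star (hA.eigenvectorUnitary : Matrix (Fin m) (Fin m) ℝ) * Q)
      (Finset.univ.filter fun i => hA.eigenvalues i < 0) hcon
  have hpos := hQ.dotProduct_mulVec_pos hy0
  rw [star_trivial, neg_mulVec, dotProduct_neg] at hpos
  rw [quad_eq_sum_s17 A hA Q y] at hpos
  have hnn : (0:ℝ) ≤ ∑ i, hA.eigenvalues i *
      (((star (hA.eigenvectorUnitary : Matrix (Fin m) (Fin m) ℝ)) * Q) *ᵥ y) i ^ 2 := by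
    apply Finset.sum_nonneg
    intro i _
    by_cases hi : hA.eigenvalues i < 0
    · rw [hyk i (by simp [hi])]; simp
    · exact mul_nonneg (le_of_not_gt hi) (sq_nonneg _)
  linarith

private lemma posdef_conj_transpose {m d : ℕ} {C : Matrix (Fin m) (Fin m) ℝ} (hC : C.PosDef)
    (Q : Matrix (Fin m) (Fin d) ℝ) (hQ : Function.Injective Q.mulVec) :
    (Qᵀ * C * Q).PosDef := by
  refine Matrix.PosDef.of_dotProduct_mulVec_pos ?_ ?_
  · have h : Qᴴ = Qᵀ := by ext i j; simp [conjTranspose_apply]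
    rw [← h]
    exact isHermitian_conjTranspose_mul_mul Q hC.1
  · intro y hy
    rw [star_trivial, ← mulVec_mulVec, ← mulVec_mulVec, dotProduct_mulVec, vecMul_transpose]
    have hne : Q *ᵥ y ≠ 0 := fun h => hy (hQ (h.trans (Matrix.mulVec_zero Q).symm))
    have := hC.dotProduct_mulVec_pos hne
    rwa [star_trivial] at this

private lemma exists_qsharp {n m : ℕ} (L : Matrix (Fin n) (Fin m) ℝ) :
    ∃ Qs : Matrix (Fin m) (Fin (m - n)) ℝ,
      L * Qs = 0 ∧ Function.Injective Qs.mulVec := by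
  classical
  set K := LinearMap.ker (Matrix.mulVecLin L) with hKdef
  have hK : m - n ≤ Module.finrank ℝ K := by
    have hr := LinearMap.finrank_range_add_finrank_ker (Matrix.mulVecLin L)
    have hle : Module.finrank ℝ (LinearMap.range (Matrix.mulVecLin L)) ≤ n := by
      have := Submodule.finrank_le (LinearMap.range (Matrix.mulVecLin L))
      simpa using this
    simp only [Module.finrank_pi, Fintype.card_fin] at hr
    rw [← hKdef] at hr
    omega
  set b := Module.finBasis ℝ K with hbdef
  set v : Fin (m - n) → (Fin m → ℝ) := fun j => (b (Fin.castLE hK j) : Fin m → ℝ) with hvdef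
  have hvK : ∀ j, L *ᵥ v j = 0 := by
    intro j
    have hmem : Matrix.mulVecLin L ((b (Fin.castLE hK j)) : Fin m → ℝ) = 0 :=
      (b (Fin.castLE hK j)).2
    rw [hvdef]
    simpa [← Matrix.mulVecLin_apply] using hmem
  have hli : LinearIndependent ℝ v := by
    have h2 : LinearIndependent ℝ (fun j : Fin (m - n) => b (Fin.castLE hK j)) :=
      b.linearIndependent.comp _ (Fin.castLE_injective hK)
    exact h2.map' K.subtype K.ker_subtype
  refine ⟨Matrix.of fun i j => v j i, ?_, ?_⟩
  · ext i j
    have := congrFun (hvK j) i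
    simpa [Matrix.mul_apply, Matrix.mulVec, dotProduct] using this
  · have hker : ∀ y : Fin (m - n) → ℝ, (Matrix.of fun i j => v j i) *ᵥ y = 0 → y = 0 := by
      intro y hy
      have hsum : ∑ j, y j • v j = 0 := by
        funext i
        have := congrFun hy i
        simpa [Matrix.mulVec, dotProduct, Finset.sum_apply, mul_comm] using this
      have := Fintype.linearIndependent_iff.mp hli y hsum
      funext j; exact this j
    intro y z hyz
    have h0 : (Matrix.of fun i j => v j i) *ᵥ (y - z) = 0 := by
      rw [Matrix.mulVec_sub, hyz, sub_self]
    exact sub_eq_zero.mp (hker _ h0)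

/-- Dual-side eigenvalue counting (Lemma 2, m > n): if `H_p := G + L C⁻¹ Lᵀ ≻ 0`
with `G ≺ 0`, `C ≻ 0`, then `H_d := -Lᵀ G⁻¹ L - C` has exactly `n` positive and
`m - n` negative eigenvalues. -/
theorem eigenvalue_counting_dual {n m : ℕ} (hmn : n < m)
    (G : Matrix (Fin n) (Fin n) ℝ) (C : Matrix (Fin m) (Fin m) ℝ)
    (L : Matrix (Fin n) (Fin m) ℝ)
    (hG : (-G).PosDef) (hC : C.PosDef)
    (hHp : (G + L * C⁻¹ * Lᵀ).PosDef) :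
    ∃ hH : (-(Lᵀ * G⁻¹ * L) - C).IsHermitian,
      (Finset.univ.filter fun i => 0 < hH.eigenvalues i).card = n ∧
      (Finset.univ.filter fun i => hH.eigenvalues i < 0).card = m - n ∧
      ∃ (Qflat : Matrix (Fin m) (Fin n) ℝ) (Qsharp : Matrix (Fin m) (Fin (m - n)) ℝ),
        (Qflatᵀ * (-(Lᵀ * G⁻¹ * L) - C) * Qflat).PosDef ∧
        (-(Qsharpᵀ * (-(Lᵀ * G⁻¹ * L) - C) * Qsharp)).PosDef := by
  classical
  -- invertibility facts
  have hnGdet : IsUnit (-G).det := (Matrix.isUnit_iff_isUnit_det _).mp hG.isUnit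
  have h1 : (-G) * (-G)⁻¹ = 1 := Matrix.mul_nonsing_inv _ hnGdet
  have h1' : (-G)⁻¹ * (-G) = 1 := Matrix.nonsing_inv_mul _ hnGdet
  have hGinv : G⁻¹ = -(-G)⁻¹ := Matrix.inv_eq_right_inv (by
    rw [Matrix.mul_neg, ← Matrix.neg_mul, h1])
  have hGG : G * G⁻¹ = 1 := by rw [hGinv, Matrix.mul_neg, ← Matrix.neg_mul, h1]
  have hGiG : G⁻¹ * G = 1 := by
    rw [hGinv]
    calc -(-G)⁻¹ * G = (-G)⁻¹ * (-G) := by rw [Matrix.neg_mul, Matrix.mul_neg]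
    _ = 1 := h1'
  have hnGinv : (-G)⁻¹ = -G⁻¹ := by rw [hGinv, neg_neg]
  have hCdet : IsUnit C.det := (Matrix.isUnit_iff_isUnit_det _).mp hC.isUnit
  have hCiC : C⁻¹ * C = 1 := Matrix.nonsing_inv_mul _ hCdet
  -- symmetry facts
  have hLh : ∀ {a b : ℕ} (M : Matrix (Fin a) (Fin b) ℝ), Mᴴ = Mᵀ := by
    intro a b M; ext i j; simp [conjTranspose_apply]
  have hCt : Cᵀ = C := by have := hC.1.eq; rwa [hLh] at this
  have hCit : C⁻¹ᵀ = C⁻¹ := by rw [transpose_nonsing_inv, hCt]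
  have hGt : Gᵀ = G := by
    have := hG.1.eq; rw [hLh, transpose_neg] at this
    exact neg_injective this
  have hGit : G⁻¹ᵀ = G⁻¹ := by rw [transpose_nonsing_inv, hGt]
  -- Hermitian
  have hH : (-(Lᵀ * G⁻¹ * L) - C).IsHermitian := by
    show (-(Lᵀ * G⁻¹ * L) - C)ᴴ = _
    rw [hLh]
    simp only [transpose_sub, transpose_neg, transpose_mul, transpose_transpose, hGit, hCt,
      Matrix.mul_assoc]
  -- key identity for Qflat
  set Hp : Matrix (Fin n) (Fin n) ℝ := G + L * C⁻¹ * Lᵀ with hHpdef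
  have key : (C⁻¹ * Lᵀ)ᵀ * (-(Lᵀ * G⁻¹ * L) - C) * (C⁻¹ * Lᵀ)
      = Hp * (-G)⁻¹ * Hp + Hp := by
    have h2 : (C⁻¹ * Lᵀ)ᵀ = L * C⁻¹ := by
      rw [transpose_mul, transpose_transpose, hCit]
    rw [h2, hnGinv, hHpdef]
    have hc2 : C⁻¹ * (C * (C⁻¹ * Lᵀ)) = C⁻¹ * Lᵀ := by
      rw [← Matrix.mul_assoc, hCiC, Matrix.one_mul]
    have hg3 : G * (G⁻¹ * (L * (C⁻¹ * Lᵀ))) = L * (C⁻¹ * Lᵀ) := by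
      rw [← Matrix.mul_assoc, hGG, Matrix.one_mul]
    simp only [Matrix.mul_sub, Matrix.sub_mul, Matrix.mul_neg, Matrix.neg_mul,
      Matrix.mul_add, Matrix.add_mul, Matrix.mul_assoc, hc2, hg3, hGiG, hGG,
      Matrix.mul_one, Matrix.one_mul]
    abel
  -- posdef of the Qflat form
  have hQf : ((C⁻¹ * Lᵀ)ᵀ * (-(Lᵀ * G⁻¹ * L) - C) * (C⁻¹ * Lᵀ)).PosDef := by
    rw [key]
    have h3 : (Hp * (-G)⁻¹ * Hp).PosSemidef := by
      have := (hG.inv.posSemidef).conjTranspose_mul_mul_same Hp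
      rwa [hHp.1] at this
    exact Matrix.PosDef.posSemidef_add h3 hHp
  -- Qsharp
  obtain ⟨Qs, hLQ, hQsinj⟩ := exists_qsharp L
  have hQsC : -(Qsᵀ * (-(Lᵀ * G⁻¹ * L) - C) * Qs) = Qsᵀ * C * Qs := by
    simp only [Matrix.sub_mul, Matrix.mul_sub, Matrix.neg_mul, Matrix.mul_neg,
      Matrix.mul_assoc, hLQ, Matrix.mul_zero, Matrix.zero_mul, neg_neg, neg_zero, zero_sub,
      sub_neg_eq_add, zero_add]
  have hQs : (-(Qsᵀ * (-(Lᵀ * G⁻¹ * L) - C) * Qs)).PosDef := by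
    rw [hQsC]
    exact posdef_conj_transpose hC Qs hQsinj
  -- counting
  have hp : n ≤ (Finset.univ.filter fun i => 0 < hH.eigenvalues i).card :=
    count_pos_ge _ hH _ hQf
  have hq : m - n ≤ (Finset.univ.filter fun i => hH.eigenvalues i < 0).card :=
    count_neg_ge _ hH _ hQs
  have hdisj : Disjoint (Finset.univ.filter fun i => 0 < hH.eigenvalues i)
      (Finset.univ.filter fun i => hH.eigenvalues i < 0) := by
    rw [Finset.disjoint_left]
    intro i hi1 hi2
    simp only [Finset.mem_filter] at hi1 hi2
    linarith [hi1.2, hi2.2]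
  have hsum : (Finset.univ.filter fun i => 0 < hH.eigenvalues i).card +
      (Finset.univ.filter fun i => hH.eigenvalues i < 0).card ≤ m := by
    rw [← Finset.card_union_of_disjoint hdisj]
    calc _ ≤ (Finset.univ : Finset (Fin m)).card := Finset.card_le_univ _
    _ = m := by simp
  refine ⟨hH, by omega, by omega, C⁻¹ * Lᵀ, Qs, hQf, hQs⟩
end

section
/- For the quadratic-log example with n = 1, m = 1: let Π(x) = ½ a x² - log(½ b x² + d) - f x with a > 0, b > 0, d > 0. Then for any critical point ς̄ ∈ [-1/d, 0) of Π^d(ς) = -½ f²/(a + ς b) + dς + 1 + log(-ς) with a + ς̄ b > 0, the point x̄ = f/(a + ς̄ b) is a global minimizer of Π on ℝ. -/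
/-- Quadratic-log example (n = m = 1): a critical point `ς̄` of the canonical dual
`Π^d` lying in `S_a^+` (i.e. `a + ς̄ b > 0`) yields the global minimizer
`x̄ = f/(a + ς̄ b)` of `Π`. -/
theorem quadratic_log_example
    (a b d f : ℝ) (ha : 0 < a) (hb : 0 < b) (hd : 0 < d)
    (Pr : ℝ → ℝ)
    (hPr : Pr = fun x => (1/2) * a * x^2 - Real.log ((1/2) * b * x^2 + d) - f * x)
    (Pd : ℝ → ℝ)
    (hPd : Pd = fun ς => -(1/2) * (f^2 / (a + ς * b)) + d * ς + 1 + Real.log (-ς))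
    (ςbar : ℝ) (hmem : ςbar ∈ Set.Ico (-(1/d)) (0:ℝ))
    (hcrit : deriv Pd ςbar = 0)
    (hpos : 0 < a + ςbar * b) :
    ∀ x : ℝ, Pr (f / (a + ςbar * b)) ≤ Pr x := by
  have hς0 : ςbar < 0 := hmem.2
  have hςne : ςbar ≠ 0 := ne_of_lt hς0
  have hGne : (a + ςbar * b) ≠ 0 := ne_of_gt hpos
  -- derivative of Pd at ςbar
  have hden : HasDerivAt (fun ς : ℝ => a + ς * b) b ςbar := by
    simpa using ((hasDerivAt_id ςbar).mul_const b).const_add a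
  have hdiv : HasDerivAt (fun ς : ℝ => f ^ 2 / (a + ς * b))
      (-(f ^ 2 * b) / (a + ςbar * b) ^ 2) ςbar := by
    have := (hasDerivAt_const ςbar (f ^ 2)).div hden hGne
    exact this.congr_deriv (by ring)
  have hneg : HasDerivAt (fun ς : ℝ => -ς) (-1 : ℝ) ςbar := (hasDerivAt_id ςbar).neg
  have hlog : HasDerivAt (fun ς : ℝ => Real.log (-ς)) ((-1) / (-ςbar)) ςbar :=
    hneg.log (neg_ne_zero.mpr hςne)
  have hPd' : HasDerivAt (fun ς : ℝ => -(1/2) * (f^2 / (a + ς * b)) + d * ς + 1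
        + Real.log (-ς))
      (-(1/2) * (-(f ^ 2 * b) / (a + ςbar * b) ^ 2) + d * 1 + (-1) / (-ςbar)) ςbar := by
    exact (((hdiv.const_mul (-(1/2))).add ((hasDerivAt_id ςbar).const_mul d)).add_const 1).add
      hlog
  have hkey : -(1/2) * (-(f ^ 2 * b) / (a + ςbar * b) ^ 2) + d * 1 + (-1) / (-ςbar) = 0 := by
    rw [← hcrit, hPd]
    exact hPd'.deriv.symm
  set xb : ℝ := f / (a + ςbar * b) with hxb
  have hGxb : (a + ςbar * b) * xb = f := by rw [hxb]; field_simp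
  -- the critical point relation: ςbar * ((1/2) b xb² + d) = -1
  have hybar : ςbar * ((1/2) * b * xb ^ 2 + d) = -1 := by
    have hG2 : ((a + ςbar * b)) ^ 2 ≠ 0 := pow_ne_zero 2 hGne
    rw [hxb, div_pow]
    field_simp at hkey ⊢
    nlinarith [hkey]
  intro x
  have hypos : 0 < (1/2) * b * x ^ 2 + d := by positivity
  have hybpos : 0 < (1/2) * b * xb ^ 2 + d := by positivity
  have hybinv : ((1/2) * b * xb ^ 2 + d)⁻¹ = -ςbar :=
    inv_eq_of_mul_eq_one_left (by nlinarith [hybar])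
  -- concavity of log: log y ≤ log yb + (-ςbar) * y - 1
  have hlogle : Real.log ((1/2) * b * x ^ 2 + d)
      ≤ Real.log ((1/2) * b * xb ^ 2 + d) + (-ςbar) * ((1/2) * b * x ^ 2 + d) - 1 := by
    have h := Real.log_le_sub_one_of_pos (div_pos hypos hybpos)
    rw [Real.log_div (ne_of_gt hypos) (ne_of_gt hybpos)] at h
    have hdy : ((1/2) * b * x ^ 2 + d) / ((1/2) * b * xb ^ 2 + d)
        = (-ςbar) * ((1/2) * b * x ^ 2 + d) := by
      rw [div_eq_mul_inv, hybinv]; ring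
    rw [hdy] at h
    linarith [h]
  have hsq : 0 ≤ (1/2) * (a + ςbar * b) * (x - xb) ^ 2 := by positivity
  have h2 : ((a + ςbar * b) * xb - f) * (x - xb) = 0 := by rw [hGxb]; ring
  rw [hPr]
  simp only
  nlinarith [hlogle, hsq, h2, hybar]
end
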